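/- The function f : ℤ₊² → ℝ defined by f(x, y) = lcm(x, y) is not positive definite; in particular, the 4 × 4 matrix indexed by {1, 2}² with entry at ((x₁, x₂), (y₁, y₂)) equal to lcm(gcd(x₁, y₁), gcd(x₂, y₂)) is not positive semidefinite. -/

import Mathlib

/-- A bivariate arithmetic function `f : ℤ₊² → ℝ` (positive integers encoded as positive
natural numbers) is *positive definite* if for every finite nonempty set `S ⊆ ℤ₊²` the
matrix with entries `f(gcd(x₁,y₁), gcd(x₂,y₂))` for `(x₁,x₂), (y₁,y₂) ∈ S` is positive
semidefinite. -/
def IsPosDefArith2 (f : ℕ → ℕ → ℝ) : Prop :=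
  ∀ S : Finset (ℕ × ℕ), S.Nonempty → (∀ p ∈ S, 0 < p.1 ∧ 0 < p.2) →
    (Matrix.of fun x y : S =>
      f (Nat.gcd x.1.1 y.1.1) (Nat.gcd x.1.2 y.1.2)).PosSemidef

/-- The function `f(x, y) = lcm(x, y)` on `ℤ₊²` is not positive
definite; in particular, the `4 × 4` matrix indexed by `{1, 2}²` (encoded via
`Fin 2 × Fin 2`, coordinate values being `i + 1`) with entry
`lcm(gcd(x₁,y₁), gcd(x₂,y₂))` is not positive semidefinite. -/
theorem lcm_not_posDefArith2 :
    ¬ IsPosDefArith2 (fun x y => (Nat.lcm x y : ℝ)) ∧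
    ¬ (Matrix.of fun p q : Fin 2 × Fin 2 =>
        (Nat.lcm (Nat.gcd ((p.1 : ℕ) + 1) ((q.1 : ℕ) + 1))
          (Nat.gcd ((p.2 : ℕ) + 1) ((q.2 : ℕ) + 1)) : ℝ)).PosSemidef := by
  have h2 : ¬ (Matrix.of fun p q : Fin 2 × Fin 2 =>
      (Nat.lcm (Nat.gcd ((p.1 : ℕ) + 1) ((q.1 : ℕ) + 1))
        (Nat.gcd ((p.2 : ℕ) + 1) ((q.2 : ℕ) + 1)) : ℝ)).PosSemidef := by
    intro h
    -- the vector `v(p) = (-1)^(p₁+p₂)` gives quadratic form `-1 < 0`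
    have hv := h.dotProduct_mulVec_nonneg (fun p => (-1 : ℝ) ^ ((p.1 : ℕ) + (p.2 : ℕ)))
    simp only [dotProduct, Matrix.mulVec, Matrix.of_apply, star_trivial,
      Fintype.sum_prod_type, Fin.sum_univ_succ, Fin.sum_univ_zero] at hv
    norm_num at hv
  refine ⟨?_, h2⟩
  intro hpd
  set S : Finset (ℕ × ℕ) := {(1,1), (1,2), (2,1), (2,2)} with hS
  have hne : S.Nonempty := ⟨(1,1), by decide⟩
  have hpos : ∀ p ∈ S, 0 < p.1 ∧ 0 < p.2 := by decide
  exact h2 ((hpd S hne hpos).submatrix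
    (fun p : Fin 2 × Fin 2 =>
      ⟨((p.1 : ℕ) + 1, (p.2 : ℕ) + 1), by fin_cases p <;> decide⟩))
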